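/- Two signed graphs on the same underlying graph are switching equivalent if and only if they have the same set of negative cycles (a cycle is negative if it contains an odd number of negative edges). -/

import Mathlib

open SimpleGraph

private lemma countP_parity_aux {V : Type} (σ τ : Sym2 V → Bool) (l : List (Sym2 V)) :
    ((l.countP fun e => !σ e) + (l.countP fun e => !τ e)) % 2
      = (l.countP fun e => Bool.xor (σ e) (τ e)) % 2 := by
  induction l with
  | nil => rfl
  | cons a l ih =>
    simp only [List.countP_cons]
    cases ha : σ a <;> cases hb : τ a <;> simp [ha, hb] <;> omega

private lemma parity_bridge {V : Type} (σ τ : Sym2 V → Bool) (l : List (Sym2 V)) :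
    ((Odd (l.countP fun e => !σ e)) ↔ Odd (l.countP fun e => !τ e))
      ↔ Even (l.countP fun e => Bool.xor (σ e) (τ e)) := by
  have h := countP_parity_aux σ τ l
  rw [Nat.odd_iff, Nat.odd_iff, Nat.even_iff]
  omega

private lemma walk_parity {V : Type} {G : SimpleGraph V} {σ τ : Sym2 V → Bool} (sw : V → Bool)
    (hsw : ∀ u v : V, G.Adj u v →
      τ s(u, v) = Bool.xor (σ s(u, v)) (Bool.xor (sw u) (sw v)))
    {a b : V} (p : G.Walk a b) :
    Odd (p.edges.countP fun e => Bool.xor (σ e) (τ e)) ↔ Bool.xor (sw a) (sw b) = true := by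
  induction p with
  | nil => simp [Nat.odd_iff]
  | @cons a c b h q ih =>
    have he : Bool.xor (σ s(a, c)) (τ s(a, c)) = Bool.xor (sw a) (sw c) := by
      rw [hsw _ _ h]
      cases σ s(a, c) <;> cases sw a <;> cases sw c <;> rfl
    rw [Walk.edges_cons, List.countP_cons]
    simp only [he]
    rcases Nat.even_or_odd (q.edges.countP fun e => Bool.xor (σ e) (τ e)) with hq | hq
    · have hq' : ¬ Odd _ := (Nat.not_odd_iff_even).mpr hq
      rw [ih] at hq'
      cases hsa : sw a <;> cases hsc : sw c <;> cases hsb : sw b <;>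
        simp_all [Nat.even_iff, Nat.odd_iff] <;> omega
    · have hq' := ih.mp hq
      cases hsa : sw a <;> cases hsc : sw c <;> cases hsb : sw b <;>
        simp_all [Nat.odd_iff] <;> omega

private lemma mem_tail_one_le_length {V : Type} {G : SimpleGraph V} {a u v : V}
    (p : G.Walk u v) (h : a ∈ p.support.tail) : 1 ≤ p.length := by
  have h1 := p.length_support
  have h2 : 0 < p.support.tail.length := List.length_pos_iff.mpr (List.ne_nil_of_mem h)
  have h3 : p.support.tail.length = p.support.length - 1 := List.length_tail
  omega

private lemma closed_walk_even {V : Type} {G : SimpleGraph V} {ρ : Sym2 V → Bool}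
    (hcyc : ∀ (u : V) (w : G.Walk u u), w.IsCycle → Even (w.edges.countP ρ)) :
    ∀ (n : ℕ) (u : V) (w : G.Walk u u), w.length ≤ n → Even (w.edges.countP ρ) := by
  classical
  intro n
  induction n with
  | zero =>
    intro u w hw
    cases w with
    | nil => simp
    | cons h p => simp [Walk.length_cons] at hw
  | succ n ih =>
    intro u w hw
    by_cases hnd : w.support.tail.Nodup
    · cases w with
      | nil => simp
      | @cons _ b _ h p =>
        have hps : p.support.Nodup := by simpa using hnd
        have hip : p.IsPath := (Walk.isPath_def p).mpr hps
        by_cases he : s(u, b) ∈ p.edges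
        · cases p with
          | nil => simp at he
          | @cons _ c _ h2 q =>
            rw [Walk.edges_cons] at he
            rcases List.mem_cons.mp he with h1 | h1
            · have huc : u = c := by
                rcases Sym2.eq_iff.mp h1 with ⟨h3, h4⟩ | ⟨h3, _⟩
                · exact h3.trans h4
                · exact h3
              subst huc
              have h4 : q.support.Nodup := by
                have := hps
                rw [Walk.support_cons, List.nodup_cons] at this
                exact this.2
              have hq : q = Walk.nil := by
                cases q with
                | nil => rfl
                | cons h3 r =>
                  exfalso
                  rw [Walk.support_cons, List.nodup_cons] at h4
                  exact h4.1 (Walk.end_mem_support r)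
              subst hq
              simp only [Walk.edges_cons, Walk.edges_nil, List.countP_cons, List.countP_nil]
              rw [Sym2.eq_swap (a := b) (b := u)]
              cases hρ : ρ s(u, b) <;> simp [hρ] <;> decide
            · exfalso
              have hb : b ∈ q.support := Walk.snd_mem_support_of_mem_edges q h1
              have := hps
              rw [Walk.support_cons, List.nodup_cons] at this
              exact this.1 hb
        · exact hcyc _ _ ((SimpleGraph.Walk.cons_isCycle_iff p h).mpr ⟨hip, he⟩)
    · obtain ⟨x, hx2⟩ : ∃ x, 2 ≤ List.count x w.support.tail := by
        by_contra hc
        push_neg at hc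
        exact hnd (List.nodup_iff_count_le_one.mpr fun a => by have := hc a; omega)
      have hxt : x ∈ w.support.tail := List.count_pos_iff.mp (by omega)
      have hx : x ∈ w.support := List.mem_of_mem_tail hxt
      have hspec : (w.takeUntil x hx).append (w.dropUntil x hx) = w := w.take_spec hx
      have hct : List.count x (w.takeUntil x hx).support = 1 :=
        w.count_support_takeUntil_eq_one hx
      have hsup : w.support = (w.takeUntil x hx).support ++ (w.dropUntil x hx).support.tail := by
        conv_lhs => rw [← hspec]
        exact Walk.support_append _ _
      have hcsup : List.count x w.support = List.count x w.support.tail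
          + (if x = u then 1 else 0) := by
        conv_lhs => rw [w.support_eq_cons]
        rw [List.count_cons]
        by_cases hxu : x = u
        · simp [hxu]
        · simp [beq_iff_eq, hxu, Ne.symm hxu]
      have hcd : 1 + (if x = u then 1 else 0)
          ≤ List.count x (w.dropUntil x hx).support.tail := by
        have h3 := congrArg (List.count x) hsup
        rw [List.count_append, hct] at h3
        by_cases hxu : x = u
        · rw [if_pos hxu] at hcsup ⊢; omega
        · rw [if_neg hxu] at hcsup ⊢; omega
      have hxd : x ∈ (w.dropUntil x hx).support.tail := by
        apply List.count_pos_iff.mp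
        by_cases hxu : x = u
        · rw [if_pos hxu] at hcd; omega
        · rw [if_neg hxu] at hcd; omega
      have hdnil : ¬ (w.dropUntil x hx).Nil := by
        intro hnil
        have h0 : (w.dropUntil x hx).length = 0 := Walk.nil_iff_length_eq.mp hnil
        have := mem_tail_one_le_length _ hxd
        omega
      obtain ⟨y, h2, e, hde⟩ := SimpleGraph.Walk.not_nil_iff.mp hdnil
      have hde' : (w.dropUntil x hx).support.tail = e.support := by
        rw [hde, Walk.support_cons, List.tail_cons]
      have hxe : x ∈ e.support := hde' ▸ hxd
      have hspec2 : (e.takeUntil x hxe).append (e.dropUntil x hxe) = e := e.take_spec hxe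
      -- length facts
      have hlw : w.length = (w.takeUntil x hx).length + ((e.takeUntil x hxe).length
          + (e.dropUntil x hxe).length + 1) := by
        conv_lhs => rw [← hspec]
        rw [Walk.length_append, hde, Walk.length_cons]
        conv_lhs => rw [← hspec2]
        rw [Walk.length_append]
      -- the extracted cycle-walk and the remaining closed walk
      have hone : 1 ≤ (w.takeUntil x hx).length + (e.dropUntil x hxe).length := by
        by_cases hxu : x = u
        · have hcte : List.count x (e.takeUntil x hxe).support = 1 :=
            e.count_support_takeUntil_eq_one hxe
          have hsupe : e.support = (e.takeUntil x hxe).support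
              ++ (e.dropUntil x hxe).support.tail := by
            conv_lhs => rw [← hspec2]
            exact Walk.support_append _ _
          have hce : 2 ≤ List.count x e.support := by
            rw [← hde']
            rw [if_pos hxu] at hcd; omega
          have h3 := congrArg (List.count x) hsupe
          rw [List.count_append, hcte] at h3
          have hmem : x ∈ (e.dropUntil x hxe).support.tail :=
            List.count_pos_iff.mp (by omega)
          have := mem_tail_one_le_length _ hmem
          omega
        · have : (w.takeUntil x hx).length ≠ 0 := by
            intro h0
            exact hxu (Walk.eq_of_length_eq_zero h0).symm
          omega
      have hc1 : Even ((Walk.cons h2 (e.takeUntil x hxe)).edges.countP ρ) := by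
        apply ih x
        rw [Walk.length_cons]
        omega
      have hc2 : Even (((w.takeUntil x hx).append (e.dropUntil x hxe)).edges.countP ρ) := by
        apply ih u
        rw [Walk.length_append]
        omega
      have hE : w.edges.countP ρ = (Walk.cons h2 (e.takeUntil x hxe)).edges.countP ρ
          + ((w.takeUntil x hx).append (e.dropUntil x hxe)).edges.countP ρ := by
        conv_lhs => rw [← hspec]
        rw [Walk.edges_append, hde, Walk.edges_cons]
        conv_lhs => rw [← hspec2]
        rw [Walk.edges_append]
        simp only [Walk.edges_cons, Walk.edges_append, List.countP_append, List.countP_cons]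
        omega
      rw [hE]
      exact hc1.add hc2


/-- `σ` and `τ` are switching equivalent signatures on the graph `G`:
`τ` is obtained from `σ` by switching at the set of vertices where `sw` is `true`
(the sign of an edge flips exactly when its endpoints get different values of `sw`). -/
def SwEquiv {V : Type} (G : SimpleGraph V) (σ τ : Sym2 V → Bool) : Prop :=
  ∃ sw : V → Bool, ∀ u v : V, G.Adj u v →
    τ s(u, v) = Bool.xor (σ s(u, v)) (Bool.xor (sw u) (sw v))

/-- Two signatures on the same graph are switching equivalent iff they
have the same set of negative cycles (a cycle is negative iff the number of its
negative edges is odd). -/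
theorem switching_equiv_iff_same_negative_cycles {V : Type} [Fintype V]
    (G : SimpleGraph V) (σ τ : Sym2 V → Bool) :
    SwEquiv G σ τ ↔
      ∀ (u : V) (w : G.Walk u u), w.IsCycle →
        (Odd (w.edges.countP fun e => !σ e) ↔ Odd (w.edges.countP fun e => !τ e)) := by
  classical
  constructor
  · rintro ⟨sw, hsw⟩ u w _
    rw [parity_bridge σ τ w.edges]
    apply Nat.not_odd_iff_even.mp
    intro hodd
    have := (walk_parity sw hsw w).mp hodd
    simp at this
  · intro h
    have hcyc : ∀ (u : V) (w : G.Walk u u), w.IsCycle →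
        Even (w.edges.countP fun e => Bool.xor (σ e) (τ e)) := fun u w hw =>
      (parity_bridge σ τ w.edges).mp (h u w hw)
    have hclosed : ∀ (u : V) (w : G.Walk u u),
        Even (w.edges.countP fun e => Bool.xor (σ e) (τ e)) := fun u w =>
      closed_walk_even hcyc w.length u w le_rfl
    have hreach : ∀ v : V, G.Reachable v (Quot.out (G.connectedComponentMk v)) := by
      intro v
      apply SimpleGraph.ConnectedComponent.exact
      exact (Quot.out_eq _).symm
    let W : ∀ v : V, G.Walk v (Quot.out (G.connectedComponentMk v)) :=
      fun v => (hreach v).some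
    refine ⟨fun v => decide (Odd ((W v).edges.countP fun e => Bool.xor (σ e) (τ e))), ?_⟩
    intro u v huv
    have hcc : G.connectedComponentMk u = G.connectedComponentMk v :=
      SimpleGraph.ConnectedComponent.connectedComponentMk_eq_of_adj huv
    have hout : Quot.out (G.connectedComponentMk u) = Quot.out (G.connectedComponentMk v) := by
      rw [hcc]
    have hev := hclosed u (Walk.cons huv ((W v).append ((W u).reverse.copy hout rfl)))
    rw [Walk.edges_cons, Walk.edges_append, Walk.edges_copy, Walk.edges_reverse,
      List.countP_cons, List.countP_append, List.countP_reverse] at hev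
    set cu := (W u).edges.countP fun e => Bool.xor (σ e) (τ e) with hcu
    set cv := (W v).edges.countP fun e => Bool.xor (σ e) (τ e) with hcv
    have key : Bool.xor (σ s(u, v)) (τ s(u, v))
        = Bool.xor (decide (Odd cu)) (decide (Odd cv)) := by
      have h2 := Nat.even_iff.mp hev
      cases hρe : Bool.xor (σ s(u, v)) (τ s(u, v)) <;> rw [hρe] at h2 <;> simp at h2
      · have : cu % 2 = cv % 2 := by omega
        simp [Nat.odd_iff, this]
      · rcases Nat.mod_two_eq_zero_or_one cu with h3 | h3 <;>
          rcases Nat.mod_two_eq_zero_or_one cv with h4 | h4 <;>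
          simp [Nat.odd_iff, h3, h4] <;> omega
    have : τ s(u, v) = Bool.xor (σ s(u, v))
        (Bool.xor (decide (Odd cu)) (decide (Odd cv))) := by
      rw [← key]
      cases σ s(u, v) <;> cases τ s(u, v) <;> rfl
    exact this
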